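/- Any group homomorphism from PSL(2,Z) to a group G is uniquely determined by a pair of elements (x, y) in G with x² = 1 and y³ = 1; conversely every such pair determines a homomorphism. -/

import Mathlib

open Matrix

instance : Fact (Even (Fintype.card (Fin 2))) := ⟨by simp⟩

/-- The subgroup `{I, -I}` of `SL(2,ℤ)`. -/
def plusMinusOne : Subgroup (SpecialLinearGroup (Fin 2) ℤ) :=
  Subgroup.zpowers (-1)

instance : plusMinusOne.Normal := by
  constructor
  intro x hx g
  obtain ⟨k, rfl⟩ := hx
  have h : g * (-1 : SpecialLinearGroup (Fin 2) ℤ) ^ k * g⁻¹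
      = (-1) ^ k := by
    have hc : Commute g ((-1 : SpecialLinearGroup (Fin 2) ℤ) ^ k) := by
      apply Commute.zpow_right
      ext i j
      simp [SpecialLinearGroup.coe_mul]
    rw [hc.eq, mul_assoc, mul_inv_cancel, mul_one]
  rw [h]
  exact ⟨k, rfl⟩

/-- The projective modular group `PSL(2,ℤ) = SL(2,ℤ)/{±I}`. -/
def PSL2Z : Type := SpecialLinearGroup (Fin 2) ℤ ⧸ plusMinusOne

noncomputable instance : Group PSL2Z := by unfold PSL2Z; infer_instance

/-- `S = [[0,-1],[1,0]]` and `U = [[0,-1],[1,-1]]`, whose images generate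
`PSL(2,ℤ)` with orders 2 and 3. -/
def Smat : SpecialLinearGroup (Fin 2) ℤ :=
  ⟨!![0, -1; 1, 0], by norm_num [Matrix.det_fin_two_of]⟩

def Umat : SpecialLinearGroup (Fin 2) ℤ :=
  ⟨!![0, -1; 1, -1], by norm_num [Matrix.det_fin_two_of]⟩

/- ### Auxiliary material -/

open Matrix.SpecialLinearGroup ModularGroup
open scoped MatrixGroups UpperHalfPlane
set_option maxRecDepth 10000

section Cyclic

/-- The homomorphism out of a cyclic group determined by an element whose
order divides `n`. -/
def cycHom {n : ℕ} [NeZero n] {G : Type} [Group G] (a : G) (h : a ^ n = 1) :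
    Multiplicative (ZMod n) →* G :=
  AddMonoidHom.toMultiplicativeLeft
    (ZMod.lift n ⟨zmultiplesHom (Additive G) (Additive.ofMul a), by
      simpa [zmultiplesHom] using congrArg Additive.ofMul h⟩)

lemma cycHom_apply {n : ℕ} [NeZero n] {G : Type} [Group G] (a : G) (h : a ^ n = 1) (k : ℤ) :
    cycHom a h (Multiplicative.ofAdd ((k : ZMod n))) = a ^ k := by
  have : cycHom a h (Multiplicative.ofAdd ((k : ZMod n)))
      = Additive.toMul (ZMod.lift n ⟨zmultiplesHom (Additive G) (Additive.ofMul a), by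
        simpa [zmultiplesHom] using congrArg Additive.ofMul h⟩ ((k : ZMod n))) := rfl
  rw [this, ZMod.lift_coe]
  rfl

lemma cycHom_one {n : ℕ} [NeZero n] {G : Type} [Group G] (a : G) (h : a ^ n = 1) :
    cycHom a h (Multiplicative.ofAdd (1 : ZMod n)) = a := by
  have := cycHom_apply a h 1
  simpa using this

end Cyclic

section MatrixFacts

lemma S_sq : (S : SL(2, ℤ)) * S = -1 := by
  ext i j
  change ((S : Matrix (Fin 2) (Fin 2) ℤ) * S) i j = _
  rw [S_mul_S_eq]
  rfl

lemma S_mul_apply (h : SL(2, ℤ)) : (S * h) 1 0 = h 0 0 := by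
  simp [SpecialLinearGroup.coe_mul, coe_S, Matrix.mul_apply, Fin.sum_univ_succ]

lemma T_zpow_mul_apply (q : ℤ) (h : SL(2, ℤ)) : (T ^ q * h) 0 0 = h 0 0 + q * h 1 0 := by
  simp [SpecialLinearGroup.coe_mul, coe_T_zpow, Matrix.mul_apply, Fin.sum_univ_succ]

lemma Smat_eq : Smat = S := rfl

lemma Umat_eq : Umat = S * T⁻¹ := by
  ext i j
  change _ = ((S : Matrix (Fin 2) (Fin 2) ℤ) * (T⁻¹ : SL(2, ℤ))) i j
  rw [coe_S, coe_T_inv]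
  fin_cases i <;> fin_cases j <;> simp [Umat]

lemma Umat_cube : Umat ^ 3 = 1 := by
  ext i j
  have : (Umat ^ 3).1 = Umat.1 * (Umat.1 * Umat.1) := by
    rw [pow_succ, pow_succ, pow_one]
    exact mul_assoc _ _ _
  rw [this]
  fin_cases i <;> fin_cases j <;> norm_num [Umat, Matrix.mul_apply, Fin.sum_univ_succ]

lemma Smat_sq : Smat ^ 2 = -1 := by
  rw [pow_two, Smat_eq]
  exact S_sq

lemma Umat_sq_coe : ((Umat ^ 2 : SL(2, ℤ)) : Matrix (Fin 2) (Fin 2) ℤ) = !![-1, 1; -1, 0] := by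
  rw [pow_two]
  change (Umat : Matrix (Fin 2) (Fin 2) ℤ) * Umat = _
  ext i j
  fin_cases i <;> fin_cases j <;> norm_num [Umat, Matrix.mul_apply, Fin.sum_univ_succ]

/-- `SL(2,ℤ)` is generated by `S` and `T`. -/
lemma closure_S_T : Subgroup.closure ({S, T} : Set (SL(2, ℤ))) = ⊤ := by
  rw [Subgroup.eq_top_iff']
  intro g
  set H := Subgroup.closure ({S, T} : Set (SL(2, ℤ))) with hH
  have hS : S ∈ H := Subgroup.subset_closure (by simp)
  have hT : T ∈ H := Subgroup.subset_closure (by simp)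
  have hTz : ∀ n : ℤ, T ^ n ∈ H := fun n => zpow_mem hT n
  have hneg : (-1 : SL(2, ℤ)) ∈ H := by rw [← S_sq]; exact mul_mem hS hS
  suffices h : ∀ n : ℕ, ∀ g : SL(2, ℤ), (g 1 0).natAbs = n → g ∈ H by
    exact h _ g rfl
  intro n
  induction n using Nat.strong_induction_on with
  | _ n ih =>
    intro g hg
    have hdet : g 0 0 * g 1 1 - g 0 1 * g 1 0 = 1 := by
      have := g.2
      rwa [Matrix.det_fin_two] at this
    rcases eq_or_ne (g 1 0) 0 with hc | hc
    · rw [hc, mul_zero, sub_zero] at hdet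
      rcases Int.eq_one_or_neg_one_of_mul_eq_one' hdet with ⟨h1, h2⟩ | ⟨h1, h2⟩
      · have : g = T ^ (g 0 1) := by
          ext i j
          rw [coe_T_zpow]
          fin_cases i <;> fin_cases j <;> simp [h1, h2, hc]
        rw [this]; exact hTz _
      · have : g = -(T ^ (-(g 0 1))) := by
          ext i j
          have hcoe : ((-(T ^ (-(g 0 1))) : SL(2, ℤ)) : Matrix (Fin 2) (Fin 2) ℤ)
              = -(!![1, -(g 0 1); 0, 1]) := by
            rw [← coe_T_zpow]; rfl
          rw [hcoe]
          fin_cases i <;> fin_cases j <;> simp [h1, h2, hc]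
        rw [this, neg_eq_neg_one_mul]
        exact mul_mem hneg (hTz _)
    · set q : ℤ := g 0 0 / g 1 0 with hq
      have hkey : ((S * (T ^ (-q) * g)) 1 0).natAbs < n := by
        rw [S_mul_apply, T_zpow_mul_apply]
        have : g 0 0 + -q * g 1 0 = g 0 0 % g 1 0 := by
          rw [Int.emod_def]; ring
        rw [this, ← hg]
        have h1 : 0 ≤ g 0 0 % g 1 0 := Int.emod_nonneg _ hc
        have h2 : g 0 0 % g 1 0 < |g 1 0| := Int.emod_lt_abs _ hc
        rw [Int.abs_eq_natAbs] at h2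
        omega
      have hmem : S * (T ^ (-q) * g) ∈ H := ih _ hkey _ rfl
      have : g = (T ^ (-q))⁻¹ * (S⁻¹ * (S * (T ^ (-q) * g))) := by group
      rw [this]
      exact mul_mem (inv_mem (hTz _)) (mul_mem (inv_mem hS) hmem)

end MatrixFacts

section HalfPlane

lemma neg_one_smul_H (z : ℍ) : ((-1 : SL(2, ℤ)) • z) = z := by
  have := ModularGroup.SL_neg_smul (1 : SL(2, ℤ)) z
  simpa using this

lemma normSq_pos_of_im (w : ℂ) (h : w.im ≠ 0) : 0 < Complex.normSq w := by
  apply Complex.normSq_pos.mpr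
  intro hw
  rw [hw] at h
  simp at h

lemma coe_smul_int (g : SL(2, ℤ)) (z : ℍ) :
    ((g • z : ℍ) : ℂ) = ((g 0 0 : ℂ) * z + (g 0 1 : ℂ)) / ((g 1 0 : ℂ) * z + (g 1 1 : ℂ)) := by
  rw [UpperHalfPlane.specialLinearGroup_apply, UpperHalfPlane.coe_mk]
  norm_num

lemma S_smul_re (z : ℍ) (h : 0 < z.re) : (Smat • z).re < 0 := by
  have hco := coe_smul_int Smat z
  have h00 : (Smat 0 0 : ℂ) = 0 := by norm_num [Smat]
  have h01 : (Smat 0 1 : ℂ) = -1 := by norm_num [Smat]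
  have h10 : (Smat 1 0 : ℂ) = 1 := by norm_num [Smat]
  have h11 : (Smat 1 1 : ℂ) = 0 := by norm_num [Smat]
  rw [h00, h01, h10, h11] at hco
  have : (Smat • z).re = ((0 * (z:ℂ) + -1) / (1 * (z:ℂ) + 0)).re := by
    rw [UpperHalfPlane.re, hco]
  rw [this]
  have hz : Complex.normSq (1 * (z:ℂ) + 0) = Complex.normSq (z:ℂ) := by ring_nf
  rw [Complex.div_re, hz]
  have hnz : 0 < Complex.normSq (z:ℂ) := normSq_pos_of_im _ (ne_of_gt z.2)
  have him : (0 * (z:ℂ) + -1).im = 0 := by simp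
  have hre : (0 * (z:ℂ) + -1).re = -1 := by simp
  have h1re : (1 * (z:ℂ) + 0).re = z.re := by simp
  rw [him, hre, h1re]
  simp only [zero_mul, add_zero, mul_zero]
  have : -1 * z.re / Complex.normSq (z:ℂ) < 0 := by
    apply div_neg_of_neg_of_pos _ hnz
    nlinarith
  simpa using this

lemma U_smul_re (z : ℍ) (h : z.re < 0) : 0 < (Umat • z).re := by
  have hco := coe_smul_int Umat z
  have h00 : (Umat 0 0 : ℂ) = 0 := by norm_num [Umat]
  have h01 : (Umat 0 1 : ℂ) = -1 := by norm_num [Umat]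
  have h10 : (Umat 1 0 : ℂ) = 1 := by norm_num [Umat]
  have h11 : (Umat 1 1 : ℂ) = -1 := by norm_num [Umat]
  rw [h00, h01, h10, h11] at hco
  have hres : (Umat • z).re = ((0 * (z:ℂ) + -1) / (1 * (z:ℂ) + -1)).re := by
    rw [UpperHalfPlane.re, hco]
  rw [hres, Complex.div_re]
  have ha_re : (0 * (z:ℂ) + -1).re = -1 := by simp
  have ha_im : (0 * (z:ℂ) + -1).im = 0 := by simp
  have hb_re : (1 * (z:ℂ) + -1).re = z.re - 1 := by
    simp; rfl
  have hb_im : (1 * (z:ℂ) + -1).im = z.im := by simp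
  have hbnz : 0 < Complex.normSq (1 * (z:ℂ) + -1) := by
    apply normSq_pos_of_im
    rw [hb_im]
    exact ne_of_gt z.2
  rw [ha_re, ha_im, hb_re]
  apply add_pos_of_pos_of_nonneg
  · apply div_pos _ hbnz
    nlinarith
  · simp

lemma U2_smul_re (z : ℍ) (h : z.re < 0) : 0 < ((Umat ^ 2) • z).re := by
  have hco := coe_smul_int (Umat ^ 2) z
  have h00 : ((Umat ^ 2) 0 0 : ℂ) = -1 := by rw [Umat_sq_coe]; norm_num
  have h01 : ((Umat ^ 2) 0 1 : ℂ) = 1 := by rw [Umat_sq_coe]; norm_num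
  have h10 : ((Umat ^ 2) 1 0 : ℂ) = -1 := by rw [Umat_sq_coe]; norm_num
  have h11 : ((Umat ^ 2) 1 1 : ℂ) = 0 := by rw [Umat_sq_coe]; norm_num
  rw [h00, h01, h10, h11] at hco
  have hres : ((Umat ^ 2) • z).re = ((-1 * (z:ℂ) + 1) / (-1 * (z:ℂ) + 0)).re := by
    rw [UpperHalfPlane.re, hco]
  rw [hres, Complex.div_re]
  have ha_re : (-1 * (z:ℂ) + 1).re = 1 - z.re := by simp; ring
  have ha_im : (-1 * (z:ℂ) + 1).im = -z.im := by simp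
  have hb_re : (-1 * (z:ℂ) + 0).re = -z.re := by simp
  have hb_im : (-1 * (z:ℂ) + 0).im = -z.im := by simp
  have hbnz : 0 < Complex.normSq (-1 * (z:ℂ) + 0) := by
    apply normSq_pos_of_im
    rw [hb_im]
    simpa using ne_of_gt z.2
  rw [ha_re, ha_im, hb_re, hb_im]
  have him : 0 < z.im := z.2
  apply add_pos_of_pos_of_nonneg
  · apply div_pos _ hbnz
    nlinarith
  · apply div_nonneg _ (le_of_lt hbnz)
    nlinarith

end HalfPlane

section FreeProduct

/-- The two factors `ℤ/2` and `ℤ/3`. -/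
def Fac : Bool → Type
  | true => Multiplicative (ZMod 2)
  | false => Multiplicative (ZMod 3)

instance facGroup : ∀ b, Group (Fac b)
  | true => inferInstanceAs (Group (Multiplicative (ZMod 2)))
  | false => inferInstanceAs (Group (Multiplicative (ZMod 3)))

/-- The images of `S` and `U` in `PSL(2,ℤ)`. -/
def Sb : PSL2Z := QuotientGroup.mk Smat
def Ub : PSL2Z := QuotientGroup.mk Umat
def Tb : PSL2Z := QuotientGroup.mk T

lemma Sb_sq : Sb ^ 2 = 1 := by
  show ((QuotientGroup.mk' plusMinusOne) Smat) ^ 2 = 1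
  refine (map_pow (QuotientGroup.mk' plusMinusOne) Smat 2).symm.trans ?_
  rw [Smat_sq]
  rw [QuotientGroup.mk'_apply, QuotientGroup.eq_one_iff]
  exact ⟨1, by simp⟩

lemma Ub_cube : Ub ^ 3 = 1 := by
  show ((QuotientGroup.mk' plusMinusOne) Umat) ^ 3 = 1
  refine (map_pow (QuotientGroup.mk' plusMinusOne) Umat 3).symm.trans ?_
  rw [Umat_cube, _root_.map_one]

/-- The defining homomorphisms of the two factors into `PSL(2,ℤ)`. -/
noncomputable def fPSL : ∀ b, Fac b →* PSL2Z
  | true => cycHom Sb Sb_sq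
  | false => cycHom Ub Ub_cube

/-- The canonical map from the free product. -/
noncomputable def ψ : Monoid.CoprodI Fac →* PSL2Z := Monoid.CoprodI.lift fPSL

lemma psi_genS : ψ (Monoid.CoprodI.of (i := true) (Multiplicative.ofAdd (1 : ZMod 2))) = Sb := by
  rw [ψ]
  exact (Monoid.CoprodI.lift_of fPSL _).trans (cycHom_one Sb Sb_sq)

lemma psi_genU : ψ (Monoid.CoprodI.of (i := false) (Multiplicative.ofAdd (1 : ZMod 3))) = Ub := by
  rw [ψ]
  exact (Monoid.CoprodI.lift_of fPSL _).trans (cycHom_one Ub Ub_cube)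

lemma closure_Sb_Ub : Subgroup.closure ({Sb, Ub} : Set PSL2Z) = ⊤ := by
  have hsurj : Function.Surjective (QuotientGroup.mk' plusMinusOne) :=
    QuotientGroup.mk'_surjective plusMinusOne
  have h1 : Subgroup.closure ({Sb, Tb} : Set PSL2Z) = ⊤ := by
    have := Subgroup.map_top_of_surjective _ hsurj
    rw [← closure_S_T, MonoidHom.map_closure] at this
    refine Eq.trans ?_ this
    congr 1
    rw [Set.image_insert_eq, Set.image_singleton]
    rfl
  rw [eq_top_iff, ← h1]
  apply Subgroup.closure_le _ |>.mpr
  intro z hz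
  rcases hz with rfl | hz
  · exact Subgroup.subset_closure (by simp)
  · rw [Set.mem_singleton_iff] at hz
    subst hz
    have hTb : Tb = Ub⁻¹ * Sb := by
      show QuotientGroup.mk T = (QuotientGroup.mk' plusMinusOne Umat)⁻¹
        * QuotientGroup.mk' plusMinusOne Smat
      rw [← _root_.map_inv, ← _root_.map_mul]
      congr 1
      rw [Umat_eq, Smat_eq]
      group
    rw [hTb]
    exact mul_mem (inv_mem (Subgroup.subset_closure (by simp)))
      (Subgroup.subset_closure (by simp))

lemma psi_surj : Function.Surjective ψ := by
  rw [← MonoidHom.range_eq_top]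
  rw [eq_top_iff, ← closure_Sb_Ub]
  apply Subgroup.closure_le _ |>.mpr
  intro z hz
  rcases hz with rfl | hz
  · exact ⟨_, psi_genS⟩
  · rw [Set.mem_singleton_iff] at hz
    subst hz
    exact ⟨_, psi_genU⟩

/-- The action of `PSL(2,ℤ)` on the upper half plane, as permutations. -/
noncomputable def π : PSL2Z →* Equiv.Perm ℍ :=
  QuotientGroup.lift plusMinusOne (MulAction.toPermHom (SL(2, ℤ)) ℍ) (by
    intro x hx
    obtain ⟨k, rfl⟩ := hx
    show MulAction.toPermHom (SL(2, ℤ)) ℍ ((-1) ^ k) = 1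
    have h1 : MulAction.toPermHom (SL(2, ℤ)) ℍ (-1) = 1 := by
      ext z
      exact congrArg _ (neg_one_smul_H z)
    rw [map_zpow, h1, _root_.one_zpow])

lemma pi_mk_smul (g : SL(2, ℤ)) (z : ℍ) : π (QuotientGroup.mk g) • z = g • z := rfl

/-- The ping-pong sets. -/
def XS : Bool → Set ℍ := fun b => if b then {z | z.re < 0} else {z | 0 < z.re}

lemma zmod2_cases : ∀ h : Multiplicative (ZMod 2), h ≠ 1 →
    h = Multiplicative.ofAdd (1 : ZMod 2) := by decide

lemma zmod3_cases : ∀ h : Multiplicative (ZMod 3), h ≠ 1 →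
    h = Multiplicative.ofAdd (1 : ZMod 3) ∨ h = Multiplicative.ofAdd (2 : ZMod 3) := by decide

lemma fPSL_false_two : fPSL false (Multiplicative.ofAdd (2 : ZMod 3)) = Ub ^ 2 := by
  have h2 : ((2 : ℤ) : ZMod 3) = (2 : ZMod 3) := by norm_cast
  have := cycHom_apply Ub Ub_cube (2 : ℤ)
  rw [h2] at this
  rw [show fPSL false (Multiplicative.ofAdd (2 : ZMod 3))
      = cycHom Ub Ub_cube (Multiplicative.ofAdd (2 : ZMod 3)) from rfl, this]
  rw [zpow_two, pow_two]

lemma psi_inj : Function.Injective ψ := by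
  set f' : ∀ b, Fac b →* Equiv.Perm ℍ := fun b => π.comp (fPSL b) with hf'
  have hlift : Monoid.CoprodI.lift f' = π.comp ψ := by
    apply Monoid.CoprodI.ext_hom
    intro i
    ext x
    simp [ψ, Monoid.CoprodI.lift_of, hf']
  have hinj' : Function.Injective (Monoid.CoprodI.lift f') := by
    apply Monoid.CoprodI.lift_injective_of_ping_pong f'
      (Or.inr ⟨false, ?_⟩) XS ?_ ?_ ?_
    · -- cardinality of ZMod 3
      have : Cardinal.mk (Fac false) = 3 := by
        rw [show Fac false = Multiplicative (ZMod 3) from rfl, Cardinal.mk_fintype]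
        simp
      rw [this]
    · -- nonempty
      intro b
      cases b
      · exact ⟨UpperHalfPlane.mk ⟨1, 1⟩ one_pos, show (0:ℝ) < 1 by norm_num⟩
      · exact ⟨UpperHalfPlane.mk ⟨-1, 1⟩ one_pos, show (-1:ℝ) < 0 by norm_num⟩
    · -- disjoint
      intro i j hne
      have key : Disjoint {z : ℍ | z.re < 0} {z : ℍ | 0 < z.re} := by
        rw [Set.disjoint_left]
        intro z h1 h2
        simp only [Set.mem_setOf_eq] at h1 h2
        linarith
      cases i <;> cases j
      · exact absurd rfl hne
      · exact key.symm
      · exact key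
      · exact absurd rfl hne
    · -- ping pong
      intro i j hne
      cases i
      · -- i = false : ZMod 3 factor, U
        intro h hne1
        have hj : j = true := by revert hne; cases j <;> simp
        subst hj
        intro w hw
        rw [Set.mem_smul_set] at hw
        obtain ⟨z, hz, rfl⟩ := hw
        have hz' : z.re < 0 := hz
        rcases zmod3_cases h hne1 with rfl | rfl
        · show π (fPSL false (Multiplicative.ofAdd (1 : ZMod 3))) • z ∈ XS false
          rw [show fPSL false (Multiplicative.ofAdd (1 : ZMod 3)) = Ub
            from cycHom_one Ub Ub_cube]
          show π (QuotientGroup.mk Umat) • z ∈ XS false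
          rw [pi_mk_smul]
          exact U_smul_re z hz'
        · show π (fPSL false (Multiplicative.ofAdd (2 : ZMod 3))) • z ∈ XS false
          rw [fPSL_false_two]
          have hUb2 : (Ub ^ 2 : PSL2Z) = QuotientGroup.mk (Umat ^ 2) := by
            show ((QuotientGroup.mk' plusMinusOne) Umat) ^ 2 = _
            exact (map_pow _ _ _).symm
          rw [hUb2, pi_mk_smul]
          exact U2_smul_re z hz'
      · -- i = true : ZMod 2 factor, S
        intro h hne1
        have hj : j = false := by revert hne; cases j <;> simp
        subst hj
        intro w hw
        rw [Set.mem_smul_set] at hw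
        obtain ⟨z, hz, rfl⟩ := hw
        have hz' : 0 < z.re := hz
        rcases zmod2_cases h hne1 with rfl
        show π (fPSL true (Multiplicative.ofAdd (1 : ZMod 2))) • z ∈ XS true
        rw [show fPSL true (Multiplicative.ofAdd (1 : ZMod 2)) = Sb
          from cycHom_one Sb Sb_sq]
        show π (QuotientGroup.mk Smat) • z ∈ XS true
        rw [pi_mk_smul]
        exact S_smul_re z hz'
  intro a b hab
  apply hinj'
  rw [hlift]
  simp only [MonoidHom.comp_apply, hab]

end FreeProduct

/-- A homomorphism out of `PSL(2,ℤ)` is uniquely determined by the images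
`x, y` of (the classes of) `S` and `U`, subject only to `x² = 1` and `y³ = 1`;
conversely any such pair determines a homomorphism. -/
theorem psl2z_hom_classification {G : Type} [Group G] (x y : G)
    (hx : x ^ 2 = 1) (hy : y ^ 3 = 1) :
    ∃! φ : PSL2Z →* G,
      φ (QuotientGroup.mk Smat) = x ∧ φ (QuotientGroup.mk Umat) = y := by
  let e : Monoid.CoprodI Fac ≃* PSL2Z := MulEquiv.ofBijective ψ ⟨psi_inj, psi_surj⟩
  set g : ∀ b, Fac b →* G := fun b => match b with
    | true => cycHom x hx
    | false => cycHom y hy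
    with hg
  set φ : PSL2Z →* G := (Monoid.CoprodI.lift g).comp e.symm.toMonoidHom with hφ
  have he_of : ∀ (w : Monoid.CoprodI Fac), e w = ψ w := fun _ => rfl
  have hφS : φ (QuotientGroup.mk Smat) = x := by
    have h1 : e.symm Sb
        = Monoid.CoprodI.of (i := true) (Multiplicative.ofAdd (1 : ZMod 2)) := by
      rw [MulEquiv.symm_apply_eq, he_of]
      exact psi_genS.symm
    show Monoid.CoprodI.lift g (e.symm Sb) = x
    rw [h1]
    exact (Monoid.CoprodI.lift_of g _).trans (cycHom_one _ _)
  have hφU : φ (QuotientGroup.mk Umat) = y := by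
    have h1 : e.symm Ub
        = Monoid.CoprodI.of (i := false) (Multiplicative.ofAdd (1 : ZMod 3)) := by
      rw [MulEquiv.symm_apply_eq, he_of]
      exact psi_genU.symm
    show Monoid.CoprodI.lift g (e.symm Ub) = y
    rw [h1]
    exact (Monoid.CoprodI.lift_of g _).trans (cycHom_one _ _)
  refine ⟨φ, ⟨hφS, hφU⟩, ?_⟩
  intro φ' ⟨hS', hU'⟩
  apply MonoidHom.eq_of_eqOn_dense closure_Sb_Ub
  intro z hz
  rcases hz with rfl | hz
  · show φ' (QuotientGroup.mk Smat) = φ (QuotientGroup.mk Smat)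
    rw [hS', hφS]
  · rw [Set.mem_singleton_iff] at hz
    subst hz
    show φ' (QuotientGroup.mk Umat) = φ (QuotientGroup.mk Umat)
    rw [hU', hφU]
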